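/- Let X be a finite set with |X| = n and let k be a positive integer with 3k < n + 2. Then the family of all k-sets of X can be partitioned into at most 2 · C(k, ⌊k/2⌋) · n^{k−1} + 1 cross-independent subfamilies, each containing at most ⌊n/k⌋ members. Equivalently, there is a coloring of the k-sets of X with at most 2 · C(k, ⌊k/2⌋) · n^{k−1} + 1 colors such that any two distinct k-sets receiving the same color are disjoint, and each color class has at most ⌊n/k⌋ members. -/

import Mathlib

section Aux

namespace KsetsAux

variable {α : Type*} [DecidableEq α]

lemma exists_not_mem_finset (B : Finset ℕ) : ∃ c, c ∉ B := by
  refine ⟨B.sup id + 1, fun h => ?_⟩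
  have h2 : id (B.sup id + 1) ≤ B.sup id := Finset.le_sup h
  simp only [id] at h2
  omega

/-- least natural number not in `B` -/
def mex (B : Finset ℕ) : ℕ := Nat.find (exists_not_mem_finset B)

lemma mex_not_mem (B : Finset ℕ) : mex B ∉ B := Nat.find_spec (exists_not_mem_finset B)

lemma mex_le_card (B : Finset ℕ) : mex B ≤ B.card := by
  by_contra h
  push_neg at h
  have hsub : Finset.range (B.card + 1) ⊆ B := by
    intro c hc
    rw [Finset.mem_range] at hc
    by_contra hcB
    have h2 : mex B ≤ c := Nat.find_min' (exists_not_mem_finset B) hcB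
    omega
  have := Finset.card_le_card hsub
  simp at this

def blockedSet (cap : ℕ) (done : List (Finset α)) (prev : List ℕ) (s : Finset α) : Finset ℕ :=
  ((Finset.range prev.length).filter fun j => ¬ Disjoint (done.getD j ∅) s).image
      (fun j => prev.getD j 0)
    ∪ prev.toFinset.filter (fun col => cap ≤ prev.count col)

def colAux (cap : ℕ) (l : List (Finset α)) : ℕ → ℕ
  | i => mex (blockedSet cap (l.take i)
      (((List.range i).attach).map fun j => colAux cap l j.1) (l.getD i ∅))
  termination_by i => i
  decreasing_by exact List.mem_range.mp j.2

lemma colAux_eq (cap : ℕ) (l : List (Finset α)) (i : ℕ) :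
    colAux cap l i = mex (blockedSet cap (l.take i)
      ((List.range i).map (colAux cap l)) (l.getD i ∅)) := by
  rw [colAux, List.attach_map_val]

end KsetsAux

namespace KsetsAux

variable {α : Type*} [DecidableEq α]

lemma getD_take (l : List (Finset α)) {i j : ℕ} (h : j < i) :
    (l.take i).getD j ∅ = l.getD j ∅ := by
  simp [List.getD_eq_getElem?_getD, List.getElem?_take, h]

lemma getD_range_map (f : ℕ → ℕ) {i j : ℕ} (h : j < i) :
    ((List.range i).map f).getD j 0 = f j := by
  simp [List.getD_eq_getElem?_getD, List.getElem?_map, List.getElem?_range h]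

lemma colAux_count_lt (cap : ℕ) (hcap : 1 ≤ cap) (l : List (Finset α)) (i : ℕ) :
    ((List.range i).map (colAux cap l)).count (colAux cap l i) < cap := by
  have h := mex_not_mem (blockedSet cap (l.take i)
      ((List.range i).map (colAux cap l)) (l.getD i ∅))
  rw [← colAux_eq] at h
  rw [blockedSet, Finset.mem_union, not_or] at h
  obtain ⟨-, h2⟩ := h
  rw [Finset.mem_filter, not_and] at h2
  by_cases hmem : colAux cap l i ∈ ((List.range i).map (colAux cap l)).toFinset
  · have := h2 hmem; omega
  · rw [List.mem_toFinset] at hmem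
    rw [List.count_eq_zero.mpr hmem]
    omega

lemma colAux_count_le (cap : ℕ) (hcap : 1 ≤ cap) (l : List (Finset α)) (col : ℕ) :
    ∀ i, ((List.range i).map (colAux cap l)).count col ≤ cap := by
  intro i
  induction i with
  | zero => simp
  | succ i ih =>
    rw [List.range_succ, List.map_append, List.count_append]
    rcases eq_or_ne (colAux cap l i) col with h | h
    · have hlt := colAux_count_lt cap hcap l i
      rw [h] at hlt
      simp [h]
      omega
    · rw [List.map_singleton, List.count_singleton']
      rw [if_neg h]
      omega

lemma colAux_disjoint (cap : ℕ) (l : List (Finset α)) {j i : ℕ} (hj : j < i)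
    (heq : colAux cap l j = colAux cap l i) :
    Disjoint (l.getD j ∅) (l.getD i ∅) := by
  by_contra hd
  have h := mex_not_mem (blockedSet cap (l.take i)
      ((List.range i).map (colAux cap l)) (l.getD i ∅))
  rw [← colAux_eq] at h
  rw [blockedSet, Finset.mem_union, not_or] at h
  obtain ⟨h1, -⟩ := h
  apply h1
  rw [Finset.mem_image]
  refine ⟨j, ?_, ?_⟩
  · rw [Finset.mem_filter, Finset.mem_range, List.length_map, List.length_range]
    exact ⟨hj, by rwa [getD_take l hj]⟩
  · rw [getD_range_map _ hj, heq]

lemma count_range_map_eq_card_filter (f : ℕ → ℕ) (i col : ℕ) :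
    ((List.range i).map f).count col
      = ((Finset.range i).filter (fun j => f j = col)).card := by
  induction i with
  | zero => simp
  | succ i ih =>
    rw [List.range_succ, List.map_append, List.count_append, Finset.range_add_one,
      Finset.filter_insert]
    rcases eq_or_ne (f i) col with h | h
    · rw [if_pos h, Finset.card_insert_of_notMem (by simp)]
      simp [h, ih]
    · rw [if_neg h, List.map_singleton, List.count_singleton']
      rw [if_neg h]
      omega

end KsetsAux

lemma ksets_arith (n k : ℕ) (hk : 1 ≤ k) (hkn : 3 * k < n + 2) :
    (k * (n - 1).choose (k - 1) - 1) + (n.choose k - 1) / (n / k)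
      ≤ 2 * k.choose (k / 2) * n ^ (k - 1) := by
  have hkle : k ≤ n := by omega
  have hn1 : 1 ≤ n := by omega
  have hcap : 1 ≤ n / k := Nat.one_le_div_iff (by omega) |>.mpr hkle
  -- k * C(n,k) = n * C(n-1,k-1)
  have hid : k * n.choose k = n * (n - 1).choose (k - 1) := by
    have := Nat.add_one_mul_choose_eq (n - 1) (k - 1)
    have h1 : n - 1 + 1 = n := by omega
    have h2 : k - 1 + 1 = k := by omega
    simp only [Nat.succ_eq_add_one, h1, h2] at this
    rw [this, Nat.mul_comm]
  have hc1 : (n - 1).choose (k - 1) ≤ n ^ (k - 1) :=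
    (Nat.choose_le_pow _ _).trans (Nat.pow_le_pow_left (by omega) _)
  have hpow : n ^ k = n * n ^ (k - 1) := by
    conv_lhs => rw [show k = 1 + (k - 1) by omega]
    rw [pow_add, pow_one]
  -- k * (n/k) ≥ n - k + 1
  have hmul : n - k + 1 ≤ k * (n / k) := by
    have h1 := Nat.div_add_mod n k
    have h2 := Nat.mod_lt n (show 0 < k by omega)
    omega
  -- C(n,k) ≤ 2 * n^(k-1) * (n/k)
  have hC : n.choose k ≤ 2 * n ^ (k - 1) * (n / k) := by
    apply Nat.le_of_mul_le_mul_left _ (show 0 < k by omega)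
    rw [hid]
    calc n * (n - 1).choose (k - 1) ≤ n * n ^ (k - 1) :=
          Nat.mul_le_mul_left _ hc1
      _ ≤ (2 * (k * (n / k))) * n ^ (k - 1) := by
          apply Nat.mul_le_mul_right
          omega
      _ = k * (2 * n ^ (k - 1) * (n / k)) := by ring
  have hQ : (n.choose k - 1) / (n / k) ≤ 2 * n ^ (k - 1) := by
    have h1 : (n.choose k - 1) / (n / k) ≤ (2 * n ^ (k - 1) * (n / k)) / (n / k) :=
      Nat.div_le_div_right (by omega)
    rwa [Nat.mul_div_cancel _ (by omega : 0 < n / k)] at h1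
  rcases eq_or_lt_of_le hk with h1 | h2
  · -- k = 1
    subst h1  -- wrong direction maybe
    simp [Nat.choose_one_right, Nat.div_eq_of_lt (show n - 1 < n by omega)]
  · -- k ≥ 2
    have hM : k ≤ k.choose (k / 2) := by
      have := Nat.choose_le_middle 1 k
      rwa [Nat.choose_one_right] at this
    have e1 : k * (n - 1).choose (k - 1) ≤ k * n ^ (k - 1) := Nat.mul_le_mul_left _ hc1
    have e2 : 2 * n ^ (k - 1) ≤ k * n ^ (k - 1) := Nat.mul_le_mul_right _ (by omega)
    have e4 : 2 * k * n ^ (k - 1) ≤ 2 * k.choose (k / 2) * n ^ (k - 1) :=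
      Nat.mul_le_mul_right _ (by omega)
    have e5 : 2 * k * n ^ (k - 1) = k * n ^ (k - 1) + k * n ^ (k - 1) := by ring
    omega

end Aux

/-- Lemma 1 of the paper: if `3k < n + 2` (with `|X| = n` and `k ≥ 1`), the `k`-sets of `X`
can be colored with at most `2 * C(k, ⌊k/2⌋) * n^(k-1) + 1` colors so that any two
distinct `k`-sets with the same color are disjoint, and each color class has at most
`⌊n/k⌋` members. -/
theorem ksets_partition_crossIndependent {α : Type*} [DecidableEq α]
    (X : Finset α) (n k : ℕ) (hX : X.card = n) (hk : 1 ≤ k) (hkn : 3 * k < n + 2) :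
    ∃ c : Finset α → ℕ,
      (∀ t ∈ X.powerset, t.card = k → c t < 2 * k.choose (k / 2) * n ^ (k - 1) + 1) ∧
      (∀ s ∈ X.powerset, ∀ t ∈ X.powerset, s.card = k → t.card = k →
        s ≠ t → c s = c t → Disjoint s t) ∧
      (∀ color : ℕ,
        (X.powerset.filter (fun t => t.card = k ∧ c t = color)).card ≤ n / k) := by
  classical
  set F : Finset (Finset α) := X.powersetCard k with hF
  set l : List (Finset α) := F.toList with hl
  set cap : ℕ := n / k with hcapdef
  set f : ℕ → ℕ := KsetsAux.colAux cap l with hf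
  have hkle : k ≤ n := by omega
  have hcap : 1 ≤ cap := (Nat.one_le_div_iff (by omega)).mpr hkle
  have hnodup : l.Nodup := F.nodup_toList
  have hLen : l.length = n.choose k := by
    rw [hl, Finset.length_toList, hF, Finset.card_powersetCard, hX]
  have hmemF : ∀ t : Finset α, t ∈ F ↔ t ⊆ X ∧ t.card = k := fun t =>
    Finset.mem_powersetCard
  have hmeml : ∀ t : Finset α, t ∈ l ↔ t ∈ F := fun t => Finset.mem_toList
  have hgetDmem : ∀ i, i < l.length → l.getD i ∅ ∈ F := by
    intro i hi
    rw [List.getD_eq_getElem l ∅ hi, ← hmeml]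
    exact List.getElem_mem hi
  have hgetD_inj : ∀ i j, i < l.length → j < l.length →
      l.getD i ∅ = l.getD j ∅ → i = j := by
    intro i j hi hj hij
    rw [List.getD_eq_getElem l ∅ hi, List.getD_eq_getElem l ∅ hj] at hij
    exact (List.Nodup.getElem_inj_iff hnodup).mp hij
  have hidx : ∀ t ∈ F, l.idxOf t < l.length ∧ l.getD (l.idxOf t) ∅ = t := by
    intro t ht
    have htl : t ∈ l := (hmeml t).mpr ht
    have h1 : l.idxOf t < l.length := List.idxOf_lt_length_iff.mpr htl
    exact ⟨h1, by rw [List.getD_eq_getElem l ∅ h1]; exact List.getElem_idxOf h1⟩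
  -- Key bound on the greedy color value
  have key : ∀ i, i < l.length → f i ≤ 2 * k.choose (k / 2) * n ^ (k - 1) := by
    intro i hi
    set s := l.getD i ∅ with hs
    have hsF : s ∈ F := hgetDmem i hi
    have hsX : s ⊆ X := ((hmemF s).mp hsF).1
    have hsk : s.card = k := ((hmemF s).mp hsF).2
    set P : List ℕ := (List.range i).map f with hP
    have hPlen : P.length = i := by rw [hP, List.length_map, List.length_range]
    set B1 : Finset ℕ := ((Finset.range P.length).filter
        fun j => ¬ Disjoint ((l.take i).getD j ∅) s).image (fun j => P.getD j 0) with hB1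
    set B2 : Finset ℕ := P.toFinset.filter (fun col => cap ≤ P.count col) with hB2
    have hsplit : KsetsAux.blockedSet cap (l.take i) P s = B1 ∪ B2 := rfl
    have h1 : f i ≤ B1.card + B2.card := by
      calc f i ≤ (KsetsAux.blockedSet cap (l.take i) P s).card := by
            rw [hf, KsetsAux.colAux_eq]; exact KsetsAux.mex_le_card _
        _ = (B1 ∪ B2).card := by rw [hsplit]
        _ ≤ B1.card + B2.card := Finset.card_union_le _ _
    -- bound B1
    have hB1card : B1.card ≤ k * (n - 1).choose (k - 1) - 1 := by
      have hJ : B1.card ≤ ((Finset.range P.length).filter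
          fun j => ¬ Disjoint ((l.take i).getD j ∅) s).card := Finset.card_image_le
      have hJ2 : ((Finset.range P.length).filter
          fun j => ¬ Disjoint ((l.take i).getD j ∅) s).card
          ≤ ((F.filter fun t => ¬ Disjoint t s).erase s).card := by
        apply Finset.card_le_card_of_injOn (fun j => l.getD j ∅)
        · intro j hj
          rw [Finset.mem_coe, Finset.mem_filter, Finset.mem_range, hPlen] at hj
          obtain ⟨hji, hjd⟩ := hj
          rw [KsetsAux.getD_take l hji] at hjd
          have hjlen : j < l.length := lt_of_lt_of_le hji (le_of_lt hi)
          rw [Finset.mem_coe, Finset.mem_erase]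
          refine ⟨?_, ?_⟩
          · intro hcon
            rw [hs] at hcon
            have := hgetD_inj j i hjlen hi hcon
            omega
          · rw [Finset.mem_filter]
            exact ⟨hgetDmem j hjlen, hjd⟩
        · intro j hj j' hj' hjj
          simp only [Finset.coe_filter, Set.mem_setOf_eq, Finset.mem_range, hPlen] at hj hj'
          exact hgetD_inj j j' (lt_of_lt_of_le hj.1 (le_of_lt hi))
            (lt_of_lt_of_le hj'.1 (le_of_lt hi)) hjj
      have hsmem : s ∈ F.filter fun t => ¬ Disjoint t s := by
        rw [Finset.mem_filter]
        refine ⟨hsF, ?_⟩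
        intro hcon
        rw [disjoint_self, Finset.bot_eq_empty] at hcon
        rw [hcon] at hsk
        simp at hsk
        omega
      have hErase : ((F.filter fun t => ¬ Disjoint t s).erase s).card
          = (F.filter fun t => ¬ Disjoint t s).card - 1 :=
        Finset.card_erase_of_mem hsmem
      have hFilter : (F.filter fun t => ¬ Disjoint t s).card
          ≤ k * (n - 1).choose (k - 1) := by
        have hsub : (F.filter fun t => ¬ Disjoint t s)
            ⊆ s.biUnion (fun x => F.filter (fun t => x ∈ t)) := by
          intro t ht
          rw [Finset.mem_filter] at ht
          obtain ⟨htF, htd⟩ := ht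
          obtain ⟨a, hat, has⟩ := Finset.not_disjoint_iff.mp htd
          rw [Finset.mem_biUnion]
          exact ⟨a, has, Finset.mem_filter.mpr ⟨htF, hat⟩⟩
        calc (F.filter fun t => ¬ Disjoint t s).card
            ≤ (s.biUnion (fun x => F.filter (fun t => x ∈ t))).card :=
              Finset.card_le_card hsub
          _ ≤ ∑ x ∈ s, (F.filter (fun t => x ∈ t)).card := Finset.card_biUnion_le
          _ ≤ ∑ _x ∈ s, (n - 1).choose (k - 1) := by
              apply Finset.sum_le_sum
              intro x hx
              have hxX : x ∈ X := hsX hx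
              have hinj : (F.filter (fun t => x ∈ t)).card
                  ≤ ((X.erase x).powersetCard (k - 1)).card := by
                apply Finset.card_le_card_of_injOn (fun t => t.erase x)
                · intro t ht
                  rw [Finset.mem_coe, Finset.mem_filter] at ht
                  obtain ⟨htF, hxt⟩ := ht
                  obtain ⟨htX, htk⟩ := (hmemF t).mp htF
                  rw [Finset.mem_coe, Finset.mem_powersetCard]
                  refine ⟨Finset.erase_subset_erase x htX, ?_⟩
                  rw [Finset.card_erase_of_mem hxt, htk]
                · intro t ht t' ht' htt
                  simp only [Finset.coe_filter, Set.mem_setOf_eq] at ht ht'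
                  have := congrArg (insert x) htt
                  rwa [Finset.insert_erase ht.2, Finset.insert_erase ht'.2] at this
              calc (F.filter (fun t => x ∈ t)).card
                  ≤ ((X.erase x).powersetCard (k - 1)).card := hinj
                _ = (n - 1).choose (k - 1) := by
                    rw [Finset.card_powersetCard, Finset.card_erase_of_mem hxX, hX]
          _ = k * (n - 1).choose (k - 1) := by
              rw [Finset.sum_const, hsk, smul_eq_mul]
      omega
    -- bound B2
    have hB2card : B2.card ≤ (n.choose k - 1) / cap := by
      have hsum : B2.card * cap ≤ ∑ col ∈ B2, P.count col := by
        have h := Finset.card_nsmul_le_sum B2 (fun col => P.count col) cap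
          (fun col hcol => (Finset.mem_filter.mp hcol).2)
        simpa [smul_eq_mul] using h
      have hsum2 : ∑ col ∈ B2, P.count col ≤ ∑ col ∈ P.toFinset, P.count col :=
        Finset.sum_le_sum_of_subset (Finset.filter_subset _ _)
      have hsum3 : ∑ col ∈ P.toFinset, P.count col = i := by
        have h := Multiset.toFinset_sum_count_eq (P : Multiset ℕ)
        have h2 : ∑ col ∈ P.toFinset, P.count col = P.length := by simpa using h
        rw [hPlen] at h2
        exact h2
      have hi2 : i + 1 ≤ n.choose k := by omega
      have hle : B2.card * cap ≤ n.choose k - 1 := by omega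
      rw [Nat.le_div_iff_mul_le (by omega : 0 < cap)]
      exact hle
    have harith := ksets_arith n k hk hkn
    rw [← hcapdef] at harith
    omega
  -- counting invariant for color classes
  have hcount : ∀ col : ℕ,
      ((Finset.range l.length).filter (fun j => f j = col)).card ≤ cap := by
    intro col
    rw [← KsetsAux.count_range_map_eq_card_filter]
    exact KsetsAux.colAux_count_le cap hcap l col l.length
  refine ⟨fun t => f (l.idxOf t), ?_, ?_, ?_⟩
  · intro t ht htk
    have htF : t ∈ F := (hmemF t).mpr ⟨Finset.mem_powerset.mp ht, htk⟩
    obtain ⟨hlt, -⟩ := hidx t htF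
    have h2 := key _ hlt
    show f (l.idxOf t) < 2 * k.choose (k / 2) * n ^ (k - 1) + 1
    omega
  · intro s hs t ht hsk htk hst hcol
    have hsF : s ∈ F := (hmemF s).mpr ⟨Finset.mem_powerset.mp hs, hsk⟩
    have htF : t ∈ F := (hmemF t).mpr ⟨Finset.mem_powerset.mp ht, htk⟩
    obtain ⟨hslt, hsget⟩ := hidx s hsF
    obtain ⟨htlt, htget⟩ := hidx t htF
    have hne : l.idxOf s ≠ l.idxOf t := by
      intro hcon
      apply hst
      rw [← hsget, ← htget, hcon]
    rcases lt_or_gt_of_ne hne with h | h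
    · have := KsetsAux.colAux_disjoint cap l h hcol
      rwa [hsget, htget] at this
    · have := KsetsAux.colAux_disjoint cap l h hcol.symm
      rw [hsget, htget] at this
      exact this.symm
  · intro col
    have hEq : X.powerset.filter (fun t => t.card = k ∧ f (l.idxOf t) = col)
        = F.filter (fun t => f (l.idxOf t) = col) := by
      rw [hF, Finset.powersetCard_eq_filter, Finset.filter_filter]
    rw [hEq]
    calc (F.filter (fun t => f (l.idxOf t) = col)).card
        ≤ ((Finset.range l.length).filter (fun j => f j = col)).card := by
          apply Finset.card_le_card_of_injOn (fun t => l.idxOf t)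
          · intro t ht
            rw [Finset.mem_coe, Finset.mem_filter] at ht
            obtain ⟨htF, htc⟩ := ht
            obtain ⟨hlt, -⟩ := hidx t htF
            rw [Finset.mem_coe, Finset.mem_filter, Finset.mem_range]
            exact ⟨hlt, htc⟩
          · intro t ht t' ht' htt
            simp only [Finset.coe_filter, Set.mem_setOf_eq] at ht ht'
            obtain ⟨-, hgt⟩ := hidx t ht.1
            obtain ⟨-, hgt'⟩ := hidx t' ht'.1
            have htt' : l.idxOf t = l.idxOf t' := htt
            rw [← hgt, ← hgt', htt']
      _ ≤ cap := hcount col
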